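/- Switching lemma: let G be a k-uniform supertree with boundary and f its first Dirichlet eigenfunction. Let e_1, e_2 be edges, U_1 ⊆ e_1, V_1 ⊆ e_2 with |U_1| = |V_1|, and suppose the switched hypergraph G' = G(e_1 ⇌ e_2 exchanging U_1 and V_1) is again a k-uniform supertree with the same boundary structure. If Σ_{u∈U_1} f(u) ≥ Σ_{v∈V_1} f(v) and Σ_{u∈e_1∖U_1} f(u) ≤ Σ_{v∈e_2∖V_1} f(v), then λ(G') ≤ λ(G). -/

import Mathlib

open Finset

variable {V : Type*} [Fintype V] [DecidableEq V]

/-- The degree of a vertex: the number of edges containing it. -/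
def deg (E : Finset (Finset V)) (v : V) : ℕ := (E.filter (fun e => v ∈ e)).card

/-- The adjacency matrix of a hypergraph. -/
noncomputable def adjMat (E : Finset (Finset V)) (i j : V) : ℝ :=
  if i ≠ j then ∑ e ∈ E.filter (fun e => i ∈ e ∧ j ∈ e), (1 : ℝ) / ((e.card : ℝ) - 1) else 0

/-- The Laplacian L = D - A applied to a function. -/
noncomputable def lap (E : Finset (Finset V)) (f : V → ℝ) (i : V) : ℝ :=
  (deg E i : ℝ) * f i - ∑ j, adjMat E i j * f j

/-- The Laplacian quadratic form ⟨Lf, f⟩. -/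
noncomputable def lapForm (E : Finset (Finset V)) (f : V → ℝ) : ℝ :=
  ∑ i, lap E f i * f i

/-- Two vertices are adjacent if they are distinct and share an edge. -/
def HAdj (E : Finset (Finset V)) (u v : V) : Prop :=
  u ≠ v ∧ ∃ e ∈ E, u ∈ e ∧ v ∈ e

/-- A hypergraph is connected if any two vertices are joined by a path. -/
def HyperConnected (E : Finset (Finset V)) : Prop :=
  ∀ u v : V, Relation.ReflTransGen (HAdj E) u v

/-- A cycle: distinct vertices u_1,…,u_p and distinct edges e_1,…,e_p (p ≥ 2)
with u_i, u_{i+1} ∈ e_i cyclically. -/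
def HasCycle (E : Finset (Finset V)) : Prop :=
  ∃ (p : ℕ) (hp : 2 ≤ p) (u : Fin p → V) (e : Fin p → Finset V),
    Function.Injective u ∧ Function.Injective e ∧
    (∀ i, e i ∈ E) ∧ (∀ i : Fin p, u i ∈ e i ∧ u (i + ⟨1, by omega⟩) ∈ e i)

/-- A k-uniform supertree: connected, acyclic, every edge of size k. -/
def IsSupertree (k : ℕ) (E : Finset (Finset V)) : Prop :=
  (∀ e ∈ E, e.card = k) ∧ HyperConnected E ∧ ¬ HasCycle E

/-- The Rayleigh quotient. -/
noncomputable def rayleigh (E : Finset (Finset V)) (f : V → ℝ) : ℝ :=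
  lapForm E f / ∑ v, (f v) ^ 2

/-- f vanishes on the boundary (the degree-one vertices). -/
def Vanishes (E : Finset (Finset V)) (f : V → ℝ) : Prop :=
  ∀ v, deg E v = 1 → f v = 0

/-- The first Dirichlet eigenvalue: infimum of Rayleigh quotients of nonzero
functions vanishing on the boundary. -/
noncomputable def firstEig (E : Finset (Finset V)) : ℝ :=
  sInf {r : ℝ | ∃ f : V → ℝ, f ≠ 0 ∧ Vanishes E f ∧ r = rayleigh E f}

/-- The first Dirichlet eigenfunction: normalized, vanishing on the boundary,
positive on interior vertices, and an eigenfunction of the first eigenvalue. -/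
noncomputable def IsFirstEigfun (E : Finset (Finset V)) (f : V → ℝ) : Prop :=
  (∑ v, (f v) ^ 2) = 1 ∧ Vanishes E f ∧ (∀ v, deg E v ≠ 1 → 0 < f v) ∧
  (∀ v, deg E v ≠ 1 → lap E f v = firstEig E * f v)

/-- The underlying simple graph of a hypergraph. -/
def toGraph (E : Finset (Finset V)) : SimpleGraph V where
  Adj u v := u ≠ v ∧ ∃ e ∈ E, u ∈ e ∧ v ∈ e
  symm := by
    constructor
    rintro u v ⟨h, e, he, hu, hv⟩
    exact ⟨h.symm, e, he, hv, hu⟩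
  loopless := by constructor; rintro u ⟨h, -⟩; exact h rfl

/-- The height of a vertex: distance to the root v0. -/
noncomputable def height (E : Finset (Finset V)) (v0 v : V) : ℕ := (toGraph E).dist v0 v

/-- Two hypergraphs have the same degree sequence. -/
def SameDegSeq (E E' : Finset (Finset V)) : Prop :=
  Multiset.map (deg E) Finset.univ.val = Multiset.map (deg E') Finset.univ.val

/-- The Faber–Krahn property: minimal first Dirichlet eigenvalue among all
k-uniform supertrees with the same degree sequence. -/
noncomputable def FKProperty (k : ℕ) (E : Finset (Finset V)) : Prop :=
  IsSupertree k E ∧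
  ∀ E' : Finset (Finset V), IsSupertree k E' → SameDegSeq E E' → firstEig E ≤ firstEig E'

/-- A spiral-like ordering (SLO-ordering) with root v0, encoded by an injective
rank function r; conditions (S1)–(S5). -/
def IsSLO (E : Finset (Finset V)) (v0 : V) (r : V → ℕ) : Prop :=
  Function.Injective r ∧ (∀ v, r v0 ≤ r v) ∧
  -- (S1)
  (∀ u v, r u < r v → height E v0 u ≤ height E v0 v) ∧
  -- (S2)
  (∀ u v u1 v1 : V, (toGraph E).Adj u u1 → height E v0 u1 = height E v0 u + 1 →
     (toGraph E).Adj v v1 → height E v0 v1 = height E v0 v + 1 →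
     r u < r v → r u1 < r v1) ∧
  -- (S3)
  (∀ u v, r u < r v → deg E u = 1 → deg E v = 1) ∧
  -- (S4): no vertex outside an edge lies between two non-minimal vertices of the edge
  (∀ e ∈ E, ∀ x ∈ e, ∀ y ∈ e, ∀ z : V, z ∉ e → r x < r z → r z < r y → ∀ w ∈ e, r x ≤ r w) ∧
  -- (S5)
  (∀ u v, deg E u ≠ 1 → deg E v ≠ 1 → r u < r v → deg E u ≤ deg E v)

/-- A supertree admitting an SLO-ordering. -/
def HasSLO (E : Finset (Finset V)) : Prop := ∃ (v0 : V) (r : V → ℕ), IsSLO E v0 r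

/-- Isomorphism of hypergraphs on the same vertex set. -/
def IsoHyper (E E' : Finset (Finset V)) : Prop :=
  ∃ σ : V ≃ V, E' = E.image (fun e => e.image σ)

/-- Per-edge quadratic form. -/
noncomputable def Qe (f : V → ℝ) (e : Finset V) : ℝ :=
  (∑ i ∈ e, f i * f i) - ((∑ i ∈ e, f i) ^ 2 - ∑ i ∈ e, f i * f i) / ((e.card : ℝ) - 1)

lemma lapForm_eq (E : Finset (Finset V)) (f : V → ℝ) :
    lapForm E f = ∑ e ∈ E, Qe f e := by
  have hdeg : ∀ i : V, ((deg E i : ℝ)) = ∑ e ∈ E, if i ∈ e then (1:ℝ) else 0 := by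
    intro i
    rw [deg, Finset.card_filter]
    push_cast
    rfl
  have step1 : lapForm E f
      = (∑ i : V, (deg E i : ℝ) * (f i * f i))
        - ∑ i : V, ∑ j : V, adjMat E i j * f j * f i := by
    rw [lapForm, ← Finset.sum_sub_distrib]
    refine Finset.sum_congr rfl fun i _ => ?_
    rw [lap, sub_mul, Finset.sum_mul, mul_assoc]
  have T1 : ∑ i : V, (deg E i : ℝ) * (f i * f i) = ∑ e ∈ E, ∑ i ∈ e, f i * f i := by
    calc ∑ i : V, (deg E i : ℝ) * (f i * f i)
        = ∑ i : V, ∑ e ∈ E, (if i ∈ e then (1:ℝ) else 0) * (f i * f i) := by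
          refine Finset.sum_congr rfl fun i _ => ?_
          rw [hdeg i, Finset.sum_mul]
      _ = ∑ e ∈ E, ∑ i : V, (if i ∈ e then (1:ℝ) else 0) * (f i * f i) := Finset.sum_comm
      _ = ∑ e ∈ E, ∑ i ∈ e, f i * f i := by
          refine Finset.sum_congr rfl fun e _ => ?_
          simp [ite_mul, Finset.sum_ite_mem]
  have key : ∀ i j : V, adjMat E i j * f j * f i
      = ∑ e ∈ E, if ((i ∈ e ∧ j ∈ e) ∧ i ≠ j) then (f j * f i) / ((e.card : ℝ) - 1) else 0 := by
    intro i j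
    by_cases hij : i = j
    · subst hij; simp [adjMat]
    · rw [adjMat, if_pos hij, Finset.sum_filter, Finset.sum_mul, Finset.sum_mul]
      refine Finset.sum_congr rfl fun e _ => ?_
      by_cases hm : i ∈ e ∧ j ∈ e
      · rw [if_pos hm, if_pos ⟨hm, hij⟩]; ring
      · rw [if_neg hm, if_neg (by tauto)]; ring
  have T2 : ∑ i : V, ∑ j : V, adjMat E i j * f j * f i
      = ∑ e ∈ E, ((∑ i ∈ e, f i) ^ 2 - ∑ i ∈ e, f i * f i) / ((e.card : ℝ) - 1) := by
    calc ∑ i : V, ∑ j : V, adjMat E i j * f j * f i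
        = ∑ i : V, ∑ j : V, ∑ e ∈ E,
            if ((i ∈ e ∧ j ∈ e) ∧ i ≠ j) then (f j * f i) / ((e.card : ℝ) - 1) else 0 :=
          Finset.sum_congr rfl fun i _ => Finset.sum_congr rfl fun j _ => key i j
      _ = ∑ i : V, ∑ e ∈ E, ∑ j : V,
            if ((i ∈ e ∧ j ∈ e) ∧ i ≠ j) then (f j * f i) / ((e.card : ℝ) - 1) else 0 :=
          Finset.sum_congr rfl fun i _ => Finset.sum_comm
      _ = ∑ e ∈ E, ∑ i : V, ∑ j : V,
            if ((i ∈ e ∧ j ∈ e) ∧ i ≠ j) then (f j * f i) / ((e.card : ℝ) - 1) else 0 :=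
          Finset.sum_comm
      _ = ∑ e ∈ E, ((∑ i ∈ e, f i) ^ 2 - ∑ i ∈ e, f i * f i) / ((e.card : ℝ) - 1) := by
          refine Finset.sum_congr rfl fun e _ => ?_
          have split : ∀ i j : V,
              (if ((i ∈ e ∧ j ∈ e) ∧ i ≠ j) then (f j * f i) / ((e.card : ℝ) - 1) else 0)
              = ((if i ∈ e then f i else 0) * (if j ∈ e then f j else 0)) / ((e.card : ℝ) - 1)
                - (if j = i then (if i ∈ e then (f i * f i) / ((e.card : ℝ) - 1) else 0) else 0) := by
            intro i j
            by_cases hij : i = j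
            · subst hij
              by_cases hi : i ∈ e <;> simp [hi]
            · by_cases hi : i ∈ e <;> by_cases hj : j ∈ e <;>
                simp [hi, hj, hij, Ne.symm hij] <;> ring
          simp only [split]
          simp only [Finset.sum_sub_distrib]
          have part2 : ∑ i : V, ∑ j : V,
              (if j = i then (if i ∈ e then (f i * f i) / ((e.card : ℝ) - 1) else 0) else 0)
              = ∑ i ∈ e, (f i * f i) / ((e.card : ℝ) - 1) := by
            calc ∑ i : V, ∑ j : V,
                (if j = i then (if i ∈ e then (f i * f i) / ((e.card : ℝ) - 1) else 0) else 0)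
                = ∑ i : V, (if i ∈ e then (f i * f i) / ((e.card : ℝ) - 1) else 0) := by
                  refine Finset.sum_congr rfl fun i _ => ?_
                  simp [Finset.sum_ite_eq']
              _ = ∑ i ∈ e, (f i * f i) / ((e.card : ℝ) - 1) := by
                  simp [Finset.sum_ite_mem]
          have part1 : ∑ i : V, ∑ j : V,
              ((if i ∈ e then f i else 0) * (if j ∈ e then f j else 0)) / ((e.card : ℝ) - 1)
              = (∑ i ∈ e, f i) * (∑ j ∈ e, f j) / ((e.card : ℝ) - 1) := by
            simp only [← Finset.sum_div]
            congr 1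
            simp only [← Finset.mul_sum]
            rw [← Finset.sum_mul]
            congr 1 <;> simp [Finset.sum_ite_mem]
          rw [part1, part2, ← Finset.sum_div, sub_div, pow_two]
  rw [step1, T1, T2, ← Finset.sum_sub_distrib]
  rfl

lemma Qe_eq {e : Finset V} (hc : 2 ≤ e.card) (f : V → ℝ) :
    Qe f e = ((e.card : ℝ) * (∑ i ∈ e, f i * f i) - (∑ i ∈ e, f i) ^ 2) / ((e.card : ℝ) - 1) := by
  have hc2 : (2:ℝ) ≤ (e.card : ℝ) := by exact_mod_cast hc
  have hc1 : ((e.card : ℝ)) - 1 ≠ 0 := by linarith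
  rw [Qe]
  field_simp
  ring

lemma Qe_nonneg {e : Finset V} (hc : 2 ≤ e.card) (f : V → ℝ) : 0 ≤ Qe f e := by
  have hc2 : (2:ℝ) ≤ (e.card : ℝ) := by exact_mod_cast hc
  have cs := Finset.sum_mul_sq_le_sq_mul_sq e (fun _ => (1:ℝ)) f
  simp only [one_mul, one_pow, Finset.sum_const, nsmul_eq_mul, mul_one] at cs
  rw [Qe_eq hc]
  apply div_nonneg _ (by linarith)
  have : ∑ i ∈ e, f i ^ 2 = ∑ i ∈ e, f i * f i := by
    exact Finset.sum_congr rfl fun i _ => by ring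
  nlinarith [cs, this]

lemma lapForm_nonneg {E : Finset (Finset V)} (hE : ∀ e ∈ E, 2 ≤ e.card) (f : V → ℝ) :
    0 ≤ lapForm E f := by
  rw [lapForm_eq]
  exact Finset.sum_nonneg fun e he => Qe_nonneg (hE e he) f
lemma firstEig_eq_lapForm {E : Finset (Finset V)} {f : V → ℝ} (hf : IsFirstEigfun E f) :
    firstEig E = lapForm E f := by
  obtain ⟨hnorm, hvan, _, heig⟩ := hf
  have : ∀ i : V, lap E f i * f i = firstEig E * (f i * f i) := by
    intro i
    by_cases hd : deg E i = 1
    · rw [hvan i hd]; ring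
    · rw [heig i hd]; ring
  rw [lapForm, Finset.sum_congr rfl fun i _ => this i, ← Finset.mul_sum]
  have : ∑ i : V, f i * f i = 1 := by
    rw [← hnorm]; exact Finset.sum_congr rfl fun i _ => by ring
  rw [this, mul_one]

lemma firstEig_le {E : Finset (Finset V)} (hE : ∀ e ∈ E, 2 ≤ e.card)
    {f : V → ℝ} (hnz : f ≠ 0) (hvan : Vanishes E f) (hnorm : ∑ v : V, (f v) ^ 2 = 1) :
    firstEig E ≤ lapForm E f := by
  have hmem : lapForm E f ∈ {r : ℝ | ∃ g : V → ℝ, g ≠ 0 ∧ Vanishes E g ∧ r = rayleigh E g} := by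
    refine ⟨f, hnz, hvan, ?_⟩
    rw [rayleigh, hnorm, div_one]
  have hbdd : BddBelow {r : ℝ | ∃ g : V → ℝ, g ≠ 0 ∧ Vanishes E g ∧ r = rayleigh E g} := by
    refine ⟨0, fun r hr => ?_⟩
    obtain ⟨g, -, -, rfl⟩ := hr
    exact div_nonneg (lapForm_nonneg hE g) (Finset.sum_nonneg fun v _ => sq_nonneg _)
  exact csInf_le hbdd hmem

/-- A walk of length `m` from `a` to `b` using edges from `F`. -/
def IsWalkW (F : Finset (Finset V)) (a b : V) (m : ℕ) (v : ℕ → V) (g : ℕ → Finset V) : Prop :=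
  v 0 = a ∧ v m = b ∧ ∀ i < m, g i ∈ F ∧ v i ∈ g i ∧ v (i + 1) ∈ g i

lemma exists_walkW {F : Finset (Finset V)} {a b : V}
    (h : Relation.ReflTransGen (HAdj F) a b) : ∃ m v g, IsWalkW F a b m v g := by
  induction h with
  | refl => exact ⟨0, fun _ => a, fun _ => ∅, rfl, rfl, by omega⟩
  | tail _ hstep ih =>
    rename_i c d _
    obtain ⟨m, v, g, h0, hm, hs⟩ := ih
    obtain ⟨hne, e, heF, hce, hde⟩ := hstep
    refine ⟨m + 1, fun t => if t ≤ m then v t else d,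
      fun t => if t < m then g t else e, by simp [h0], by simp, ?_⟩
    intro i hi
    by_cases him : i < m
    · have h3 := hs i him
      simp only [if_pos him, if_pos (by omega : i ≤ m), if_pos (by omega : i + 1 ≤ m)]
      exact h3
    · have hieq : i = m := by omega
      subst hieq
      simp only [if_neg (lt_irrefl i), if_pos (le_refl i), if_neg (by omega : ¬ i + 1 ≤ i)]
      exact ⟨heF, by rw [hm]; exact hce, by simp [hde]⟩

lemma shorten_vertexW {F : Finset (Finset V)} {a b : V} {m : ℕ} {v : ℕ → V} {g : ℕ → Finset V}
    (hw : IsWalkW F a b m v g) {i j : ℕ} (hij : i < j) (hjm : j ≤ m) (hv : v i = v j) :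
    ∃ v' g', IsWalkW F a b (m - (j - i)) v' g' := by
  obtain ⟨h0, hm, hs⟩ := hw
  refine ⟨fun t => if t < i then v t else v (t + (j - i)),
    fun t => if t < i then g t else g (t + (j - i)), ?_, ?_, ?_⟩
  · by_cases hi0 : 0 < i
    · simp [hi0, h0]
    · have hieq : i = 0 := by omega
      subst hieq
      simpa [hv] using h0
  · have hh1 : ¬ (m - (j - i) < i) := by omega
    have hh2 : m - (j - i) + (j - i) = m := by omega
    simp [hh1, hh2, hm]
  · intro t ht
    by_cases hti : t < i
    · have h3 := hs t (by omega)
      simp only [if_pos hti]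
      refine ⟨h3.1, h3.2.1, ?_⟩
      by_cases ht1 : t + 1 < i
      · simpa [ht1] using h3.2.2
      · have hteq : t + 1 = i := by omega
        have hidx : t + 1 + (j - i) = j := by omega
        rw [if_neg ht1, hidx, ← hv, ← hteq]
        exact h3.2.2
    · have h3 := hs (t + (j - i)) (by omega)
      have ht1 : ¬ (t + 1 < i) := by omega
      simp only [if_neg hti, if_neg ht1]
      have hidx : t + 1 + (j - i) = t + (j - i) + 1 := by omega
      rw [hidx]
      exact h3

lemma shorten_edgeW {F : Finset (Finset V)} {a b : V} {m : ℕ} {v : ℕ → V} {g : ℕ → Finset V}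
    (hw : IsWalkW F a b m v g) {i j : ℕ} (hij : i < j) (hjm : j < m) (hg : g i = g j) :
    ∃ v' g', IsWalkW F a b (m - (j - i)) v' g' := by
  obtain ⟨h0, hm, hs⟩ := hw
  refine ⟨fun t => if t ≤ i then v t else v (t + (j - i)),
    fun t => if t ≤ i then g t else g (t + (j - i)), ?_, ?_, ?_⟩
  · simp [Nat.zero_le, h0]
  · have hh1 : ¬ (m - (j - i) ≤ i) := by omega
    have hh2 : m - (j - i) + (j - i) = m := by omega
    simp [hh1, hh2, hm]
  · intro t ht
    rcases Nat.lt_trichotomy t i with hti | hti | hti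
    · have h3 := hs t (by omega)
      simp only [if_pos (by omega : t ≤ i), if_pos (by omega : t + 1 ≤ i)]
      exact h3
    · subst hti
      have h3 := hs t (by omega)
      have h4 := hs j (by omega)
      simp only [if_pos (le_refl t), if_neg (by omega : ¬ t + 1 ≤ t)]
      have hidx : t + 1 + (j - t) = j + 1 := by omega
      rw [hidx]
      exact ⟨h3.1, h3.2.1, hg ▸ h4.2.2⟩
    · have h3 := hs (t + (j - i)) (by omega)
      simp only [if_neg (by omega : ¬ t ≤ i), if_neg (by omega : ¬ t + 1 ≤ i)]
      have hidx : t + 1 + (j - i) = t + (j - i) + 1 := by omega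
      rw [hidx]
      exact h3

lemma cycle_of_detour {E : Finset (Finset V)} {e : Finset V} (heE : e ∈ E) {a b : V}
    (ha : a ∈ e) (hb : b ∈ e) (hab : a ≠ b)
    (h : Relation.ReflTransGen (HAdj (E.erase e)) a b) : HasCycle E := by
  classical
  have hex : ∃ m, ∃ v, ∃ g, IsWalkW (E.erase e) a b m v g := exists_walkW h
  obtain ⟨v, g, hw⟩ : ∃ v g, IsWalkW (E.erase e) a b (Nat.find hex) v g := Nat.find_spec hex
  set m0 := Nat.find hex with hm0def
  have hm0 : 1 ≤ m0 := by
    rcases Nat.eq_zero_or_pos m0 with h0 | h1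
    · exact absurd (by rw [← hw.1, ← hw.2.1, h0]) hab
    · exact h1
  have hvinj : ∀ i j, i < j → j ≤ m0 → v i ≠ v j := by
    intro i j hij hjm hv
    obtain ⟨v', g', hw'⟩ := shorten_vertexW hw hij hjm hv
    exact Nat.find_min hex (by omega) ⟨v', g', hw'⟩
  have hginj : ∀ i j, i < j → j < m0 → g i ≠ g j := by
    intro i j hij hjm hgeq
    obtain ⟨v', g', hw'⟩ := shorten_edgeW hw hij hjm hgeq
    exact Nat.find_min hex (by omega) ⟨v', g', hw'⟩
  refine ⟨m0 + 1, by omega, fun i => v i.val, fun i => if i.val < m0 then g i.val else e,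
    ?_, ?_, ?_, ?_⟩
  · intro i j hij
    simp only at hij
    by_cases hvv : i.val = j.val
    · exact Fin.ext hvv
    · exfalso
      rcases Nat.lt_or_ge i.val j.val with hlt | hge
      · exact hvinj i.val j.val hlt (by omega) hij
      · exact hvinj j.val i.val (by omega) (by omega) hij.symm
  · intro i j hij
    simp only at hij
    by_cases hi : i.val < m0 <;> by_cases hj : j.val < m0
    · rw [if_pos hi, if_pos hj] at hij
      rcases Nat.lt_trichotomy i.val j.val with hh | hh | hh
      · exact absurd hij (hginj _ _ hh hj)
      · exact Fin.ext hh
      · exact absurd hij.symm (hginj _ _ hh hi)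
    · rw [if_pos hi, if_neg hj] at hij
      exact absurd hij (Finset.mem_erase.1 (hw.2.2 i.val hi).1).1
    · rw [if_neg hi, if_pos hj] at hij
      exact absurd hij.symm (Finset.mem_erase.1 (hw.2.2 j.val hj).1).1
    · exact Fin.ext (by omega)
  · intro i
    by_cases hi : i.val < m0
    · simp only [if_pos hi]
      exact Finset.mem_of_mem_erase (hw.2.2 i.val hi).1
    · simp only [if_neg hi]
      exact heE
  · intro i
    by_cases hi : i.val < m0
    · simp only [if_pos hi]
      refine ⟨(hw.2.2 i.val hi).2.1, ?_⟩
      show v ((i + ⟨1, by omega⟩ : Fin (m0 + 1)).val) ∈ g i.val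
      have hval : ((i + ⟨1, by omega⟩ : Fin (m0 + 1))).val = i.val + 1 := by
        rw [Fin.val_add]
        simp only [Fin.val_mk]
        exact Nat.mod_eq_of_lt (by omega)
      rw [hval]
      exact (hw.2.2 i.val hi).2.2
    · have hieq : i.val = m0 := by omega
      simp only [if_neg hi]
      constructor
      · show v i.val ∈ e
        rw [hieq, hw.2.1]
        exact hb
      · show v ((i + ⟨1, by omega⟩ : Fin (m0 + 1)).val) ∈ e
        have hval : ((i + ⟨1, by omega⟩ : Fin (m0 + 1))).val = 0 := by
          rw [Fin.val_add]
          simp only [Fin.val_mk, hieq]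
          simp
        rw [hval, hw.1]
        exact ha

lemma hasCycle_of_two {E : Finset (Finset V)} {A B : Finset V} (hA : A ∈ E) (hB : B ∈ E)
    (hAB : A ≠ B) {x y : V} (hxy : x ≠ y) (hxA : x ∈ A) (hyA : y ∈ A)
    (hxB : x ∈ B) (hyB : y ∈ B) : HasCycle E := by
  refine ⟨2, le_refl 2, fun i => if i.val = 0 then x else y,
    fun i => if i.val = 0 then A else B, ?_, ?_, ?_, ?_⟩
  · intro i j hij
    fin_cases i <;> fin_cases j <;> simp_all
  · intro i j hij
    fin_cases i <;> fin_cases j <;> simp_all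
  · intro i
    by_cases h : i.val = 0 <;> simp [h, hA, hB]
  · intro i
    fin_cases i <;> simp_all [Fin.val_add]

lemma rtg_until {r : V → V → Prop} {a b : V} (h : Relation.ReflTransGen r a b) (hab : a ≠ b) :
    ∃ c, Relation.ReflTransGen (fun x y => r x y ∧ x ≠ b ∧ y ≠ b) a c ∧ r c b := by
  revert hab
  induction h using Relation.ReflTransGen.head_induction_on with
  | refl => intro hab; exact absurd rfl hab
  | head step tail ih =>
    rename_i a' c
    intro hab
    by_cases hcb : c = b
    · subst hcb
      exact ⟨a', Relation.ReflTransGen.refl, step⟩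
    · obtain ⟨c', hchain, hlast⟩ := ih hcb
      exact ⟨c', Relation.ReflTransGen.head ⟨step, hab, hcb⟩ hchain, hlast⟩

lemma hadj_mono {F F' : Finset (Finset V)} (h : F ⊆ F') {x y : V} (hxy : HAdj F x y) :
    HAdj F' x y := by
  obtain ⟨hne, g, hg, hx, hy⟩ := hxy
  exact ⟨hne, g, h hg, hx, hy⟩

lemma k2_contra {E E' : Finset (Finset V)} {p q r s : V}
    (hacyc : ¬ HasCycle E) (hconn' : HyperConnected E')
    (hA : ({p, q} : Finset V) ∈ E) (hB : ({r, s} : Finset V) ∈ E)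
    (hC : ({q, r} : Finset V) ∈ E \ {({p, q} : Finset V), ({r, s} : Finset V)})
    (hsub : E' ⊆ (E \ {({p, q} : Finset V), ({r, s} : Finset V)})
      ∪ {({q, r} : Finset V), ({s, p} : Finset V)})
    (hpq : p ≠ q) (hrs : r ≠ s) (hqr : q ≠ r) : False := by
  set D := E \ {({p, q} : Finset V), ({r, s} : Finset V)} with hD
  obtain ⟨c, hchain, hlast⟩ := rtg_until (hconn' q p) (Ne.symm hpq)
  have hDsubA : D ⊆ E.erase ({p, q} : Finset V) := by
    intro z hz
    rw [Finset.mem_erase]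
    have hz' := Finset.mem_sdiff.1 hz
    refine ⟨?_, hz'.1⟩
    intro hcontra
    exact hz'.2 (by rw [hcontra]; simp)
  have hDsubB : D ⊆ E.erase ({r, s} : Finset V) := by
    intro z hz
    rw [Finset.mem_erase]
    have hz' := Finset.mem_sdiff.1 hz
    refine ⟨?_, hz'.1⟩
    intro hcontra
    exact hz'.2 (by rw [hcontra]; simp)
  have hchainD : Relation.ReflTransGen (HAdj D) q c := by
    refine Relation.ReflTransGen.mono ?_ _ _ hchain
    rintro x y ⟨⟨hne, g, hg, hx, hy⟩, hxp, hyp⟩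
    rcases Finset.mem_union.1 (hsub hg) with hg1 | hg2
    · exact ⟨hne, g, hg1, hx, hy⟩
    · rcases Finset.mem_insert.1 hg2 with hgC | hgD2
      · exact ⟨hne, g, by rw [hgC]; exact hC, hx, hy⟩
      · exfalso
        rw [Finset.mem_singleton] at hgD2
        subst hgD2
        have hx' : x = s := by
          rcases Finset.mem_insert.1 hx with hh | hh
          · exact hh
          · exact absurd (Finset.mem_singleton.1 hh) hxp
        have hy' : y = s := by
          rcases Finset.mem_insert.1 hy with hh | hh
          · exact hh
          · exact absurd (Finset.mem_singleton.1 hh) hyp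
        exact hne (hx'.trans hy'.symm)
  obtain ⟨hne, g, hg, hcg, hpg⟩ := hlast
  have finish1 : g ∈ D → False := by
    intro hg1
    have full : Relation.ReflTransGen (HAdj D) q p :=
      hchainD.tail ⟨hne, g, hg1, hcg, hpg⟩
    exact hacyc (cycle_of_detour hA (by simp) (by simp) (Ne.symm hpq)
      (Relation.ReflTransGen.mono (fun x y hh => hadj_mono hDsubA hh) _ _ full))
  rcases Finset.mem_union.1 (hsub hg) with hg1 | hg2
  · exact finish1 hg1
  · rcases Finset.mem_insert.1 hg2 with hgC | hgD2
    · exact finish1 (by rw [hgC]; exact hC)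
    · rw [Finset.mem_singleton] at hgD2
      subst hgD2
      have hcs : c = s := by
        rcases Finset.mem_insert.1 hcg with hh | hh
        · exact hh
        · exact absurd (Finset.mem_singleton.1 hh) hne
      subst hcs
      have step0 : HAdj D r q := ⟨Ne.symm hqr, {q, r}, hC, by simp, by simp⟩
      have full : Relation.ReflTransGen (HAdj D) r c :=
        Relation.ReflTransGen.head step0 hchainD
      exact hacyc (cycle_of_detour hB (by simp) (by simp) hrs
        (Relation.ReflTransGen.mono (fun x y hh => hadj_mono hDsubB hh) _ _ full))
set_option maxHeartbeats 1000000 in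
/-- the switching lemma. If f is the first Dirichlet eigenfunction
of a k-uniform supertree G, and the switched hypergraph G' (exchanging
U₁ ⊆ e₁ with V₁ ⊆ e₂, |U₁| = |V₁|) is again a k-uniform supertree, and
Σ_{U₁} f ≥ Σ_{V₁} f and Σ_{e₁∖U₁} f ≤ Σ_{e₂∖V₁} f, then λ(G') ≤ λ(G). -/

theorem switching_lemma (k : ℕ) (hk : 2 ≤ k)
    (E : Finset (Finset V)) (hG : IsSupertree k E)
    (f : V → ℝ) (hf : IsFirstEigfun E f)
    (e1 e2 : Finset V) (he1 : e1 ∈ E) (he2 : e2 ∈ E)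
    (U1 V1 : Finset V) (hU : U1 ⊆ e1) (hV : V1 ⊆ e2) (hcard : U1.card = V1.card)
    (hG' : IsSupertree k ((E \ {e1, e2}) ∪ {(e1 \ U1) ∪ V1, (e2 \ V1) ∪ U1}))
    (h1 : ∑ x ∈ V1, f x ≤ ∑ x ∈ U1, f x)
    (h2 : ∑ x ∈ e1 \ U1, f x ≤ ∑ x ∈ e2 \ V1, f x) :
    firstEig ((E \ {e1, e2}) ∪ {(e1 \ U1) ∪ V1, (e2 \ V1) ∪ U1}) ≤ firstEig E := by
  classical
  have hE'k := hG'.1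
  have he1'mem : (e1 \ U1) ∪ V1 ∈ (E \ {e1, e2}) ∪ {(e1 \ U1) ∪ V1, (e2 \ V1) ∪ U1} :=
    Finset.mem_union_right _ (by simp)
  have he2'mem : (e2 \ V1) ∪ U1 ∈ (E \ {e1, e2}) ∪ {(e1 \ U1) ∪ V1, (e2 \ V1) ∪ U1} :=
    Finset.mem_union_right _ (by simp)
  have hce1' : ((e1 \ U1) ∪ V1).card = k := hE'k _ he1'mem
  have hce2' : ((e2 \ V1) ∪ U1).card = k := hE'k _ he2'mem
  have hce1 : e1.card = k := hG.1 _ he1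
  have hce2 : e2.card = k := hG.1 _ he2
  by_cases hee : e1 = e2
  · -- degenerate case : the switch does nothing
    subst hee
    have h1e : (e1 \ U1) ∪ V1 = e1 :=
      Finset.eq_of_subset_of_card_le (Finset.union_subset Finset.sdiff_subset hV)
        (by rw [hce1', hce1])
    have h2e : (e1 \ V1) ∪ U1 = e1 :=
      Finset.eq_of_subset_of_card_le (Finset.union_subset Finset.sdiff_subset hU)
        (by rw [hce2', hce1])
    rw [h1e, h2e]
    have hEE : (E \ ({e1, e1} : Finset (Finset V))) ∪ {e1, e1} = E :=
      Finset.sdiff_union_of_subset (by simp [he1])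
    rw [hEE]
  · -- main case
    have hne12 : e1 ≠ e2 := hee
    have htle : U1.card ≤ k := hce1 ▸ Finset.card_le_card hU
    have htlev : V1.card ≤ k := hce2 ▸ Finset.card_le_card hV
    have hsd1 : (e1 \ U1).card = k - U1.card := by rw [Finset.card_sdiff_of_subset hU, hce1]
    have hsd2 : (e2 \ V1).card = k - V1.card := by rw [Finset.card_sdiff_of_subset hV, hce2]
    have hd1 : Disjoint (e1 \ U1) V1 := by
      have hcu := Finset.card_union_add_card_inter (e1 \ U1) V1
      rw [hce1', hsd1] at hcu
      rw [Finset.disjoint_iff_inter_eq_empty, ← Finset.card_eq_zero]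
      omega
    have hd2 : Disjoint (e2 \ V1) U1 := by
      have hcu := Finset.card_union_add_card_inter (e2 \ V1) U1
      rw [hce2', hsd2] at hcu
      rw [Finset.disjoint_iff_inter_eq_empty, ← Finset.card_eq_zero]
      omega
    have hne12' : (e1 \ U1) ∪ V1 ≠ (e2 \ V1) ∪ U1 := by
      intro hh
      apply hne12
      have hUV : U1 = V1 := by
        apply Finset.Subset.antisymm
        · intro z hz
          have : z ∈ (e1 \ U1) ∪ V1 := by rw [hh]; exact Finset.mem_union_right _ hz
          rcases Finset.mem_union.1 this with h | h
          · exact absurd (Finset.mem_sdiff.1 h).2 (not_not.2 hz)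
          · exact h
        · intro z hz
          have : z ∈ (e2 \ V1) ∪ U1 := by rw [← hh]; exact Finset.mem_union_right _ hz
          rcases Finset.mem_union.1 this with h | h
          · exact absurd (Finset.mem_sdiff.1 h).2 (not_not.2 hz)
          · exact h
      have hss : e1 \ U1 = e2 \ V1 := by
        apply Finset.Subset.antisymm
        · intro z hz
          have : z ∈ (e2 \ V1) ∪ U1 := by rw [← hh]; exact Finset.mem_union_left _ hz
          rcases Finset.mem_union.1 this with h | h
          · exact h
          · exact absurd h (Finset.mem_sdiff.1 hz).2
        · intro z hz
          have : z ∈ (e1 \ U1) ∪ V1 := by rw [hh]; exact Finset.mem_union_left _ hz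
          rcases Finset.mem_union.1 this with h | h
          · exact h
          · exact absurd (hUV ▸ h) (hUV ▸ (Finset.mem_sdiff.1 hz).2)
      rw [← Finset.sdiff_union_of_subset hU, ← Finset.sdiff_union_of_subset hV, hss, hUV]
    -- no collision with the old edges
    have hcol1 : (e1 \ U1) ∪ V1 ∉ E \ {e1, e2} := by
      intro hmem
      have h3E : (e1 \ U1) ∪ V1 ∈ E := (Finset.mem_sdiff.1 hmem).1
      have h3ne : (e1 \ U1) ∪ V1 ∉ ({e1, e2} : Finset (Finset V)) := (Finset.mem_sdiff.1 hmem).2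
      have h3ne1 : (e1 \ U1) ∪ V1 ≠ e1 := fun h => h3ne (by simp [h])
      have h3ne2 : (e1 \ U1) ∪ V1 ≠ e2 := fun h => h3ne (by simp [h])
      by_cases ht0 : U1.card = 0
      · apply h3ne1
        have hU0 : U1 = ∅ := Finset.card_eq_zero.1 ht0
        have hV0 : V1 = ∅ := Finset.card_eq_zero.1 (by omega)
        rw [hU0, hV0]
        simp
      · by_cases htk : U1.card = k
        · apply h3ne2
          have hUe : U1 = e1 := Finset.eq_of_subset_of_card_le hU (by omega)
          have hVe : V1 = e2 := Finset.eq_of_subset_of_card_le hV (by omega)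
          rw [hUe, hVe]
          simp
        · by_cases ht2 : 2 ≤ U1.card
          · obtain ⟨x, hx, y, hy, hxy⟩ := Finset.one_lt_card.1 (show 1 < V1.card by omega)
            exact hG.2.2 (hasCycle_of_two h3E he2 h3ne2 hxy (Finset.mem_union_right _ hx)
              (Finset.mem_union_right _ hy) (hV hx) (hV hy))
          · by_cases hkt2 : 2 ≤ k - U1.card
            · obtain ⟨x, hx, y, hy, hxy⟩ :=
                Finset.one_lt_card.1 (show 1 < (e1 \ U1).card by omega)
              exact hG.2.2 (hasCycle_of_two h3E he1 h3ne1 hxy (Finset.mem_union_left _ hx)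
                (Finset.mem_union_left _ hy) (Finset.mem_sdiff.1 hx).1 (Finset.mem_sdiff.1 hy).1)
            · -- the hard case : k = 2 and |U1| = 1
              have hk2 : k = 2 := by omega
              have ht1 : U1.card = 1 := by omega
              obtain ⟨u, hu⟩ := Finset.card_eq_one.1 ht1
              obtain ⟨x, hx⟩ := Finset.card_eq_one.1 (show V1.card = 1 by omega)
              obtain ⟨w, hw⟩ := Finset.card_eq_one.1 (show (e1 \ U1).card = 1 by omega)
              obtain ⟨y, hy⟩ := Finset.card_eq_one.1 (show (e2 \ V1).card = 1 by omega)
              have he1eq : e1 = ({u, w} : Finset V) := by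
                rw [← Finset.sdiff_union_of_subset hU, hw, hu]
                ext z; simp; tauto
              have he2eq : e2 = ({x, y} : Finset V) := by
                rw [← Finset.sdiff_union_of_subset hV, hy, hx]
                ext z; simp; tauto
              have h1'eq : (e1 \ U1) ∪ V1 = ({w, x} : Finset V) := by
                rw [hw, hx]; ext z; simp
              have h2'eq : (e2 \ V1) ∪ U1 = ({y, u} : Finset V) := by
                rw [hy, hu]; ext z; simp
              have hpq : u ≠ w := by
                intro h
                rw [he1eq, h] at hce1
                simp at hce1
                omega
              have hrs : x ≠ y := by
                intro h
                rw [he2eq, h] at hce2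
                simp at hce2
                omega
              have hqr : w ≠ x := by
                intro h
                have hw1 : w ∈ e1 \ U1 := by rw [hw]; exact Finset.mem_singleton_self w
                have hw2 : w ∈ V1 := by rw [hx, h]; exact Finset.mem_singleton_self x
                exact Finset.disjoint_left.1 hd1 hw1 hw2
              have hC : ({w, x} : Finset V) ∈ E \ {({u, w} : Finset V), ({x, y} : Finset V)} := by
                rw [← h1'eq, ← he1eq, ← he2eq]
                exact hmem
              refine k2_contra (p := u) (q := w) (r := x) (s := y) hG.2.2 hG'.2.1 ?_ ?_ hC ?_
                hpq hrs hqr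
              · rw [← he1eq]; exact he1
              · rw [← he2eq]; exact he2
              · rw [← he1eq, ← he2eq, ← h1'eq, ← h2'eq]
    have hcol2 : (e2 \ V1) ∪ U1 ∉ E \ {e1, e2} := by
      intro hmem
      have h3E : (e2 \ V1) ∪ U1 ∈ E := (Finset.mem_sdiff.1 hmem).1
      have h3ne : (e2 \ V1) ∪ U1 ∉ ({e1, e2} : Finset (Finset V)) := (Finset.mem_sdiff.1 hmem).2
      have h3ne1 : (e2 \ V1) ∪ U1 ≠ e1 := fun h => h3ne (by simp [h])
      have h3ne2 : (e2 \ V1) ∪ U1 ≠ e2 := fun h => h3ne (by simp [h])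
      by_cases ht0 : U1.card = 0
      · apply h3ne2
        have hU0 : U1 = ∅ := Finset.card_eq_zero.1 ht0
        have hV0 : V1 = ∅ := Finset.card_eq_zero.1 (by omega)
        rw [hU0, hV0]
        simp
      · by_cases htk : U1.card = k
        · apply h3ne1
          have hUe : U1 = e1 := Finset.eq_of_subset_of_card_le hU (by omega)
          have hVe : V1 = e2 := Finset.eq_of_subset_of_card_le hV (by omega)
          rw [hUe, hVe]
          simp
        · by_cases ht2 : 2 ≤ U1.card
          · obtain ⟨x, hx, y, hy, hxy⟩ := Finset.one_lt_card.1 (show 1 < U1.card by omega)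
            exact hG.2.2 (hasCycle_of_two h3E he1 h3ne1 hxy (Finset.mem_union_right _ hx)
              (Finset.mem_union_right _ hy) (hU hx) (hU hy))
          · by_cases hkt2 : 2 ≤ k - U1.card
            · obtain ⟨x, hx, y, hy, hxy⟩ :=
                Finset.one_lt_card.1 (show 1 < (e2 \ V1).card by omega)
              exact hG.2.2 (hasCycle_of_two h3E he2 h3ne2 hxy (Finset.mem_union_left _ hx)
                (Finset.mem_union_left _ hy) (Finset.mem_sdiff.1 hx).1 (Finset.mem_sdiff.1 hy).1)
            · have hk2 : k = 2 := by omega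
              have ht1 : U1.card = 1 := by omega
              obtain ⟨u, hu⟩ := Finset.card_eq_one.1 ht1
              obtain ⟨x, hx⟩ := Finset.card_eq_one.1 (show V1.card = 1 by omega)
              obtain ⟨w, hw⟩ := Finset.card_eq_one.1 (show (e1 \ U1).card = 1 by omega)
              obtain ⟨y, hy⟩ := Finset.card_eq_one.1 (show (e2 \ V1).card = 1 by omega)
              have he1eq : e1 = ({u, w} : Finset V) := by
                rw [← Finset.sdiff_union_of_subset hU, hw, hu]
                ext z; simp; tauto
              have he2eq : e2 = ({x, y} : Finset V) := by
                rw [← Finset.sdiff_union_of_subset hV, hy, hx]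
                ext z; simp; tauto
              have h1'eq : (e1 \ U1) ∪ V1 = ({w, x} : Finset V) := by
                rw [hw, hx]; ext z; simp
              have h2'eq : (e2 \ V1) ∪ U1 = ({y, u} : Finset V) := by
                rw [hy, hu]; ext z; simp
              have hpq : u ≠ w := by
                intro h
                rw [he1eq, h] at hce1
                simp at hce1
                omega
              have hrs : x ≠ y := by
                intro h
                rw [he2eq, h] at hce2
                simp at hce2
                omega
              have hqr' : y ≠ u := by
                intro h
                have hy1 : y ∈ e2 \ V1 := by rw [hy]; exact Finset.mem_singleton_self y
                have hy2 : y ∈ U1 := by rw [hu, h]; exact Finset.mem_singleton_self u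
                exact Finset.disjoint_left.1 hd2 hy1 hy2
              have hC : ({y, u} : Finset V) ∈ E \ {({x, y} : Finset V), ({u, w} : Finset V)} := by
                rw [← h2'eq, Finset.pair_comm ({x, y} : Finset V) ({u, w} : Finset V),
                  ← he1eq, ← he2eq]
                exact hmem
              refine k2_contra (p := x) (q := y) (r := u) (s := w) hG.2.2 hG'.2.1 ?_ ?_ hC ?_
                hrs hpq hqr'
              · rw [← he2eq]; exact he2
              · rw [← he1eq]; exact he1
              · rw [← he1eq, ← he2eq, ← h1'eq, ← h2'eq,
                  Finset.pair_comm e1 e2, Finset.pair_comm ((e1 \ U1) ∪ V1) ((e2 \ V1) ∪ U1)]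
    have hcol : ∀ e3 ∈ ({(e1 \ U1) ∪ V1, (e2 \ V1) ∪ U1} : Finset (Finset V)),
        e3 ∉ E \ {e1, e2} := by
      intro e3 he3
      rcases Finset.mem_insert.1 he3 with h | h
      · rw [h]; exact hcol1
      · rw [Finset.mem_singleton.1 h]; exact hcol2
    have hdisj : Disjoint (E \ {e1, e2}) ({(e1 \ U1) ∪ V1, (e2 \ V1) ∪ U1} : Finset (Finset V)) := by
      rw [Finset.disjoint_right]
      intro a ha
      exact hcol a ha
    have hEeq : (E \ {e1, e2}) ∪ {e1, e2} = E :=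
      Finset.sdiff_union_of_subset
        (Finset.insert_subset he1 (Finset.singleton_subset_iff.2 he2))
    -- degrees are preserved
    have hdeg : ∀ v, deg ((E \ {e1, e2}) ∪ {(e1 \ U1) ∪ V1, (e2 \ V1) ∪ U1}) v = deg E v := by
      intro v
      have hsplit : ∀ (A B : Finset (Finset V)), Disjoint A B →
          deg (A ∪ B) v = deg A v + deg B v := by
        intro A B hAB
        rw [deg, deg, deg, Finset.filter_union,
          Finset.card_union_of_disjoint (Finset.disjoint_filter_filter hAB)]
      have hpair : ∀ (a b : Finset V), a ≠ b → deg ({a, b} : Finset (Finset V)) v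
          = (if v ∈ a then 1 else 0) + (if v ∈ b then 1 else 0) := by
        intro a b hab
        rw [deg]
        by_cases hva : v ∈ a <;> by_cases hvb : v ∈ b <;>
          simp [Finset.filter_insert, Finset.filter_singleton, hva, hvb, hab]
      rw [hsplit _ _ hdisj, hpair _ _ hne12']
      conv_rhs => rw [← hEeq]
      rw [hsplit _ _ Finset.sdiff_disjoint, hpair _ _ hne12]
      congr 1
      have m1 : v ∈ (e1 \ U1) ∪ V1 ↔ (v ∈ e1 ∧ v ∉ U1) ∨ v ∈ V1 := by
        simp [Finset.mem_union, Finset.mem_sdiff]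
      have m2 : v ∈ (e2 \ V1) ∪ U1 ↔ (v ∈ e2 ∧ v ∉ V1) ∨ v ∈ U1 := by
        simp [Finset.mem_union, Finset.mem_sdiff]
      have hk1 : v ∈ U1 → v ∈ e1 := @hU v
      have hk2 : v ∈ V1 → v ∈ e2 := @hV v
      have hk3 : v ∈ e1 → v ∉ U1 → v ∉ V1 :=
        fun ha hb => Finset.disjoint_left.1 hd1 (Finset.mem_sdiff.2 ⟨ha, hb⟩)
      have hk4 : v ∈ e2 → v ∉ V1 → v ∉ U1 :=
        fun ha hb => Finset.disjoint_left.1 hd2 (Finset.mem_sdiff.2 ⟨ha, hb⟩)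
      by_cases hvU : v ∈ U1
      · have hv1 : v ∈ e1 := hk1 hvU
        by_cases hvV : v ∈ V1
        · have hv2 : v ∈ e2 := hk2 hvV
          simp [m1, m2, hvU, hvV, hv1, hv2]
        · have hv2 : v ∉ e2 := fun h => (hk4 h hvV) hvU
          simp [m1, m2, hvU, hvV, hv1, hv2]
      · by_cases hvV : v ∈ V1
        · have hv2 : v ∈ e2 := hk2 hvV
          have hv1 : v ∉ e1 := fun h => (hk3 h hvU) hvV
          simp [m1, m2, hvU, hvV, hv1, hv2]
        · by_cases hv1 : v ∈ e1 <;> by_cases hv2 : v ∈ e2 <;>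
            simp [m1, m2, hvU, hvV, hv1, hv2]
    -- f is admissible for E'
    have hnz : f ≠ 0 := by
      intro hzero
      have := hf.1
      rw [hzero] at this
      simp at this
    have hvan' : Vanishes ((E \ {e1, e2}) ∪ {(e1 \ U1) ∪ V1, (e2 \ V1) ∪ U1}) f := by
      intro v hv
      rw [hdeg v] at hv
      exact hf.2.1 v hv
    -- quadratic form comparison
    have hcomp : Qe f ((e1 \ U1) ∪ V1) + Qe f ((e2 \ V1) ∪ U1) ≤ Qe f e1 + Qe f e2 := by
      have c1 : 2 ≤ e1.card := by omega
      have c2 : 2 ≤ e2.card := by omega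
      have c3 : 2 ≤ ((e1 \ U1) ∪ V1).card := by omega
      have c4 : 2 ≤ ((e2 \ V1) ∪ U1).card := by omega
      rw [Qe_eq c1, Qe_eq c2, Qe_eq c3, Qe_eq c4, hce1, hce2, hce1', hce2']
      have s1 : ∑ i ∈ e1, f i = ∑ i ∈ e1 \ U1, f i + ∑ i ∈ U1, f i := (Finset.sum_sdiff hU).symm
      have s2 : ∑ i ∈ e1, f i * f i = ∑ i ∈ e1 \ U1, f i * f i + ∑ i ∈ U1, f i * f i :=
        (Finset.sum_sdiff hU).symm
      have s3 : ∑ i ∈ e2, f i = ∑ i ∈ e2 \ V1, f i + ∑ i ∈ V1, f i := (Finset.sum_sdiff hV).symm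
      have s4 : ∑ i ∈ e2, f i * f i = ∑ i ∈ e2 \ V1, f i * f i + ∑ i ∈ V1, f i * f i :=
        (Finset.sum_sdiff hV).symm
      have s5 : ∑ i ∈ (e1 \ U1) ∪ V1, f i = ∑ i ∈ e1 \ U1, f i + ∑ i ∈ V1, f i :=
        Finset.sum_union hd1
      have s6 : ∑ i ∈ (e1 \ U1) ∪ V1, f i * f i
          = ∑ i ∈ e1 \ U1, f i * f i + ∑ i ∈ V1, f i * f i := Finset.sum_union hd1
      have s7 : ∑ i ∈ (e2 \ V1) ∪ U1, f i = ∑ i ∈ e2 \ V1, f i + ∑ i ∈ U1, f i :=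
        Finset.sum_union hd2
      have s8 : ∑ i ∈ (e2 \ V1) ∪ U1, f i * f i
          = ∑ i ∈ e2 \ V1, f i * f i + ∑ i ∈ U1, f i * f i := Finset.sum_union hd2
      rw [s1, s2, s3, s4, s5, s6, s7, s8]
      have hkpos : (0:ℝ) < (k:ℝ) - 1 := by
        have : (2:ℝ) ≤ (k:ℝ) := by exact_mod_cast hk
        linarith
      rw [← add_div, ← add_div, div_le_div_iff_of_pos_right hkpos]
      nlinarith [mul_nonneg (sub_nonneg.2 h2) (sub_nonneg.2 h1)]
    -- assemble
    have hsumE : lapForm E f = (∑ e ∈ E \ {e1, e2}, Qe f e) + (Qe f e1 + Qe f e2) := by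
      rw [lapForm_eq]
      conv_lhs => rw [← hEeq]
      rw [Finset.sum_union Finset.sdiff_disjoint, Finset.sum_pair hne12]
    have hsumE' : lapForm ((E \ {e1, e2}) ∪ {(e1 \ U1) ∪ V1, (e2 \ V1) ∪ U1}) f
        = (∑ e ∈ E \ {e1, e2}, Qe f e) + (Qe f ((e1 \ U1) ∪ V1) + Qe f ((e2 \ V1) ∪ U1)) := by
      rw [lapForm_eq, Finset.sum_union hdisj, Finset.sum_pair hne12']
    have hfE : firstEig E = lapForm E f := firstEig_eq_lapForm hf
    have hfE' : firstEig ((E \ {e1, e2}) ∪ {(e1 \ U1) ∪ V1, (e2 \ V1) ∪ U1})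
        ≤ lapForm ((E \ {e1, e2}) ∪ {(e1 \ U1) ∪ V1, (e2 \ V1) ∪ U1}) f := by
      refine firstEig_le (fun e he => ?_) hnz hvan' hf.1
      rw [hE'k e he]; exact hk
    linarith
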